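/- Let 𝒜 be a unital C*-algebra and (V, V⁺, e) an AOU 𝒜-space. Suppose (Q_n)_{n∈ℕ} is an operator 𝒜-system structure on V with Q_1 = V⁺ such that, for every operator 𝒜-system S, every positive 𝒜-bimodule map φ: S → (V, (Q_n), e) is completely positive. Then Q_n = C_n^{min}(V;𝒜) for every n ∈ ℕ; that is, the identity map of V is a unital 𝒜-bimodule complete order isomorphism from (V, (Q_n), e) onto omin_𝒜(V) := (V, (C_n^{min}(V;𝒜)), e). -/
import Mathlib


open Matrix

noncomputable section

/-- An AOU `𝒜`-space: an Archimedean order unit *-vector space `(V, pos, e)` which is an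
`A`-bimodule (actions `l`, `r`) satisfying `(a·x)* = x*·a*`, `a·e = e·a` and
`a*·x·a ∈ V⁺` for `x ∈ V⁺`. -/
structure AOUPack (A V : Type*) [Ring A] [StarRing A] [Algebra ℂ A]
    [AddCommGroup V] [Module ℂ V] [StarAddMonoid V] [StarModule ℂ V] where
  /-- the left action `a · x` -/
  l : A → V → V
  /-- the right action `x · a` -/
  r : V → A → V
  /-- the cone `V⁺` of positive elements -/
  pos : Set V
  /-- the Archimedean order unit -/
  e : V
  l_add : ∀ a b x, l (a + b) x = l a x + l b x
  add_l : ∀ a x y, l a (x + y) = l a x + l a y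
  smul_l : ∀ (c : ℂ) a x, l (c • a) x = c • l a x
  l_smul : ∀ (c : ℂ) a x, l a (c • x) = c • l a x
  r_add : ∀ x y a, r (x + y) a = r x a + r y a
  add_r : ∀ x a b, r x (a + b) = r x a + r x b
  smul_r : ∀ (c : ℂ) x a, r (c • x) a = c • r x a
  r_smul : ∀ (c : ℂ) x a, r x (c • a) = c • r x a
  mul_l : ∀ a b x, l (a * b) x = l a (l b x)
  mul_r : ∀ x a b, r x (a * b) = r (r x a) b
  l_r_assoc : ∀ a x b, r (l a x) b = l a (r x b)
  one_l : ∀ x, l 1 x = x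
  star_l : ∀ a x, star (l a x) = r (star x) (star a)
  pos_isSelfAdjoint : ∀ x ∈ pos, star x = x
  pos_add_mem : ∀ x ∈ pos, ∀ y ∈ pos, x + y ∈ pos
  pos_smul_mem : ∀ (t : ℝ), 0 ≤ t → ∀ x ∈ pos, (t : ℂ) • x ∈ pos
  pos_nonempty : pos.Nonempty
  pos_salient : ∀ x ∈ pos, -x ∈ pos → x = 0
  e_isSelfAdjoint : star e = e
  e_orderUnit : ∀ x, star x = x → ∃ t : ℝ, 0 < t ∧ (t : ℂ) • e - x ∈ pos
  e_arch : ∀ x, (∀ t : ℝ, 0 < t → x + (t : ℂ) • e ∈ pos) → x ∈ pos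
  e_comm : ∀ a, l a e = r e a
  conj_mem : ∀ a, ∀ x ∈ pos, r (l (star a) x) a ∈ pos

namespace AOUPack

variable {A V : Type*} [Ring A] [StarRing A] [Algebra ℂ A]
  [AddCommGroup V] [Module ℂ V] [StarAddMonoid V] [StarModule ℂ V]

variable (P : AOUPack A V)

/-- The action of a matrix over `A` on a matrix over `V` from the left:
`(M · X)_{ij} = Σ_p M_{ip} · X_{pj}`. -/
def amul {k m n : ℕ} (M : Matrix (Fin k) (Fin m) A) (X : Matrix (Fin m) (Fin n) V) :
    Matrix (Fin k) (Fin n) V :=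
  Matrix.of fun i j => ∑ p, P.l (M i p) (X p j)

/-- The action of a matrix over `A` on a matrix over `V` from the right:
`(X · N)_{ij} = Σ_p X_{ip} · N_{pj}`. -/
def vmul {m n l : ℕ} (X : Matrix (Fin m) (Fin n) V) (N : Matrix (Fin n) (Fin l) A) :
    Matrix (Fin m) (Fin l) V :=
  Matrix.of fun i j => ∑ p, P.r (X i p) (N p j)

/-- The congruence `M* · X · M` of `X ∈ M_m(V)` by `M ∈ M_{m,n}(A)`. -/
def conj {m n : ℕ} (M : Matrix (Fin m) (Fin n) A) (X : Matrix (Fin m) (Fin m) V) :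
    Matrix (Fin n) (Fin n) V :=
  P.vmul (P.amul Mᴴ X) M

/-- The diagonal matrix `e_n ∈ M_n(V)` with all diagonal entries equal to `e`. -/
def matE (n : ℕ) : Matrix (Fin n) (Fin n) V := Matrix.diagonal fun _ => P.e

/-- `C_n^{min}(V; A)`: hermitian `X ∈ M_n(V)` with `C* · X · C ∈ V⁺` for every
column `C ∈ M_{n,1}(A)`. -/
def Cmin (n : ℕ) : Set (Matrix (Fin n) (Fin n) V) :=
  {X | Xᴴ = X ∧ ∀ C : Matrix (Fin n) (Fin 1) A, P.conj C X 0 0 ∈ P.pos}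

/-- `D_n^{max}(V; A)`: finite sums `Σ_i A_i* · x_i · A_i` with `x_i ∈ V⁺` and
`A_i ∈ M_{1,n}(A)`. -/
def Dmax (n : ℕ) : Set (Matrix (Fin n) (Fin n) V) :=
  {X | ∃ (k : ℕ) (x : Fin k → V) (a : Fin k → Matrix (Fin 1) (Fin n) A),
    (∀ i, x i ∈ P.pos) ∧ X = ∑ i, P.conj (a i) (Matrix.of fun _ _ => x i)}

/-- `C_n^{max}(V; A) = {X : X + r e_n ∈ D_n^{max}(V; A) for all r > 0}`. -/
def Cmax (n : ℕ) : Set (Matrix (Fin n) (Fin n) V) :=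
  {X | ∀ t : ℝ, 0 < t → X + (t : ℂ) • P.matE n ∈ P.Dmax n}

/-- `Q` is an operator `A`-system structure on `V`: an `A`-compatible matrix ordering
with `Q 1 = V⁺` such that `e_n` is an Archimedean order unit for `Q n` for every `n`. -/
structure IsOperatorSystemStructure (Q : ∀ n : ℕ, Set (Matrix (Fin n) (Fin n) V)) : Prop where
  herm : ∀ n, ∀ X ∈ Q n, Xᴴ = X
  add_mem : ∀ n, ∀ X ∈ Q n, ∀ Y ∈ Q n, X + Y ∈ Q n
  smul_mem : ∀ n (t : ℝ), 0 ≤ t → ∀ X ∈ Q n, (t : ℂ) • X ∈ Q n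
  nonempty : ∀ n, (Q n).Nonempty
  salient : ∀ n, ∀ X ∈ Q n, -X ∈ Q n → X = 0
  compat : ∀ m n (X : Matrix (Fin m) (Fin m) V) (M : Matrix (Fin m) (Fin n) A),
    X ∈ Q m → P.conj M X ∈ Q n
  level_one : ∀ X : Matrix (Fin 1) (Fin 1) V, X ∈ Q 1 ↔ X 0 0 ∈ P.pos
  orderUnit : ∀ n (X : Matrix (Fin n) (Fin n) V), Xᴴ = X →
    ∃ t : ℝ, 0 < t ∧ (t : ℂ) • P.matE n - X ∈ Q n
  arch : ∀ n (X : Matrix (Fin n) (Fin n) V),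
    (∀ t : ℝ, 0 < t → X + (t : ℂ) • P.matE n ∈ Q n) → X ∈ Q n

end AOUPack

namespace AOUPack

section Aux

variable {A V : Type*} [Ring A] [StarRing A] [Algebra ℂ A]
  [AddCommGroup V] [Module ℂ V] [StarAddMonoid V] [StarModule ℂ V]
  (P : AOUPack A V)

lemma l_zero' (a : A) : P.l a 0 = 0 := by
  have h := P.l_smul 0 a 0
  simpa using h

lemma zero_l' (x : V) : P.l 0 x = 0 := by
  have h := P.smul_l 0 0 x
  simpa using h

lemma r_zero' (a : A) : P.r 0 a = 0 := by
  have h := P.smul_r 0 0 a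
  simpa using h

lemma zero_r' (x : V) : P.r x 0 = 0 := by
  have h := P.r_smul 0 x 0
  simpa using h

lemma one_r' (x : V) : P.r x 1 = x := by
  have h := P.star_l 1 (star x)
  rw [P.one_l] at h
  simpa using h.symm

lemma star_r' (x : V) (a : A) : star (P.r x a) = P.l (star a) (star x) := by
  have h := P.star_l (star a) (star x)
  simp only [star_star] at h
  rw [← h, star_star]

lemma l_sum' {ι : Type*} (a : A) (s : Finset ι) (f : ι → V) :
    P.l a (∑ i ∈ s, f i) = ∑ i ∈ s, P.l a (f i) :=
  map_sum (AddMonoidHom.mk' (P.l a) (P.add_l a)) f s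

lemma sum_l' {ι : Type*} (x : V) (s : Finset ι) (f : ι → A) :
    P.l (∑ i ∈ s, f i) x = ∑ i ∈ s, P.l (f i) x :=
  map_sum (AddMonoidHom.mk' (fun a => P.l a x) (fun a b => P.l_add a b x)) f s

lemma r_sum' {ι : Type*} (a : A) (s : Finset ι) (f : ι → V) :
    P.r (∑ i ∈ s, f i) a = ∑ i ∈ s, P.r (f i) a :=
  map_sum (AddMonoidHom.mk' (fun x => P.r x a) (fun x y => P.r_add x y a)) f s

lemma sum_r' {ι : Type*} (x : V) (s : Finset ι) (f : ι → A) :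
    P.r x (∑ i ∈ s, f i) = ∑ i ∈ s, P.r x (f i) :=
  map_sum (AddMonoidHom.mk' (fun a => P.r x a) (fun a b => P.add_r x a b)) f s

lemma zero_pos : (0 : V) ∈ P.pos := by
  obtain ⟨x, hx⟩ := P.pos_nonempty
  have h := P.pos_smul_mem 0 le_rfl x hx
  simpa using h

lemma sum_pos {ι : Type*} (s : Finset ι) (f : ι → V) (h : ∀ i ∈ s, f i ∈ P.pos) :
    ∑ i ∈ s, f i ∈ P.pos :=
  Finset.sum_induction f (· ∈ P.pos) (fun a b ha hb => P.pos_add_mem a ha b hb) P.zero_pos h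

lemma e_pos : P.e ∈ P.pos := by
  obtain ⟨t, ht, h⟩ := P.e_orderUnit (-P.e) (by rw [star_neg, P.e_isSelfAdjoint])
  have h2 : ((t + 1 : ℝ) : ℂ) • P.e ∈ P.pos := by
    have : ((t + 1 : ℝ) : ℂ) • P.e = (t : ℂ) • P.e - -P.e := by
      push_cast; rw [add_smul, one_smul]; abel
    rw [this]; exact h
  have h3 := P.pos_smul_mem ((t + 1)⁻¹) (by positivity) _ h2
  rw [smul_smul] at h3
  have ht1 : (t + 1 : ℝ) ≠ 0 := by positivity
  rw [show (((t+1)⁻¹ : ℝ) : ℂ) * ((t + 1 : ℝ) : ℂ) = 1 by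
    push_cast
    rw [inv_mul_cancel₀]
    exact_mod_cast ht1] at h3
  simpa using h3

end Aux

end AOUPack

namespace AOUPack

section Aux2

variable {A V : Type*} [Ring A] [StarRing A] [Algebra ℂ A]
  [AddCommGroup V] [Module ℂ V] [StarAddMonoid V] [StarModule ℂ V]
  (P : AOUPack A V)

lemma amul_amul' {k m n l : ℕ} (M : Matrix (Fin k) (Fin m) A)
    (N : Matrix (Fin m) (Fin n) A) (X : Matrix (Fin n) (Fin l) V) :
    P.amul M (P.amul N X) = P.amul (M * N) X := by
  ext i j
  simp only [amul, Matrix.of_apply, P.l_sum', Matrix.mul_apply, P.sum_l']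
  rw [Finset.sum_comm]
  apply Finset.sum_congr rfl; intro q _
  apply Finset.sum_congr rfl; intro p _
  rw [P.mul_l]

lemma vmul_vmul' {k m n l : ℕ} (X : Matrix (Fin k) (Fin m) V)
    (M : Matrix (Fin m) (Fin n) A) (N : Matrix (Fin n) (Fin l) A) :
    P.vmul (P.vmul X M) N = P.vmul X (M * N) := by
  ext i j
  simp only [vmul, Matrix.of_apply, P.r_sum', Matrix.mul_apply, P.sum_r']
  rw [Finset.sum_comm]
  apply Finset.sum_congr rfl; intro q _
  apply Finset.sum_congr rfl; intro p _
  rw [P.mul_r]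

lemma amul_vmul' {k m n l : ℕ} (M : Matrix (Fin k) (Fin m) A)
    (X : Matrix (Fin m) (Fin n) V) (N : Matrix (Fin n) (Fin l) A) :
    P.amul M (P.vmul X N) = P.vmul (P.amul M X) N := by
  ext i j
  simp only [amul, vmul, Matrix.of_apply, P.l_sum', P.r_sum']
  rw [Finset.sum_comm]
  apply Finset.sum_congr rfl; intro q _
  apply Finset.sum_congr rfl; intro p _
  rw [P.l_r_assoc]

lemma conj_conj' {m n k : ℕ} (M : Matrix (Fin m) (Fin n) A)
    (N : Matrix (Fin n) (Fin k) A) (X : Matrix (Fin m) (Fin m) V) :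
    P.conj N (P.conj M X) = P.conj (M * N) X := by
  unfold conj
  rw [P.amul_vmul', P.amul_amul', P.vmul_vmul', Matrix.conjTranspose_mul]

lemma conj_apply' {m n : ℕ} (M : Matrix (Fin m) (Fin n) A)
    (X : Matrix (Fin m) (Fin m) V) (i j : Fin n) :
    P.conj M X i j = ∑ q, ∑ p, P.r (P.l (star (M p i)) (X p q)) (M q j) := by
  simp only [conj, vmul, amul, Matrix.of_apply, P.r_sum', Matrix.conjTranspose_apply]

lemma conj_add' {m n : ℕ} (M : Matrix (Fin m) (Fin n) A)
    (X Y : Matrix (Fin m) (Fin m) V) :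
    P.conj M (X + Y) = P.conj M X + P.conj M Y := by
  ext i j
  simp only [Matrix.add_apply, P.conj_apply', P.add_l, P.r_add, Finset.sum_add_distrib]

lemma conj_smul' {m n : ℕ} (c : ℂ) (M : Matrix (Fin m) (Fin n) A)
    (X : Matrix (Fin m) (Fin m) V) :
    P.conj M (c • X) = c • P.conj M X := by
  ext i j
  simp only [Matrix.smul_apply, P.conj_apply', P.l_smul, P.smul_r, Finset.smul_sum]

lemma conj_zero' {m n : ℕ} (M : Matrix (Fin m) (Fin n) A) :
    P.conj M (0 : Matrix (Fin m) (Fin m) V) = 0 := by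
  ext i j
  simp [P.conj_apply', P.l_zero', P.r_zero']

lemma conj_conjTranspose' {m n : ℕ} (M : Matrix (Fin m) (Fin n) A)
    (X : Matrix (Fin m) (Fin m) V) :
    (P.conj M X)ᴴ = P.conj M Xᴴ := by
  ext i j
  simp only [Matrix.conjTranspose_apply, P.conj_apply', star_sum]
  rw [Finset.sum_comm]
  apply Finset.sum_congr rfl; intro q _
  apply Finset.sum_congr rfl; intro p _
  rw [P.star_r', P.star_l]
  simp only [star_star]
  rw [← P.l_r_assoc]

end Aux2

end AOUPack

namespace AOUPack

section Aux3

variable {A V : Type*} [Ring A] [StarRing A] [Algebra ℂ A]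
  [AddCommGroup V] [Module ℂ V] [StarAddMonoid V] [StarModule ℂ V]
  [StarModule ℂ A] (P : AOUPack A V)

set_option linter.unusedSectionVars false

/-- The scalar "bilinear form" `Σ_{p,q} (c̄_p d_q) • X_{pq}`. -/
def bf {n : ℕ} (X : Matrix (Fin n) (Fin n) V) (c d : Fin n → ℂ) : V :=
  ∑ q, ∑ p, (star (c p) * d q) • X p q

lemma bf_add_left' {n : ℕ} (X : Matrix (Fin n) (Fin n) V) (c c' d : Fin n → ℂ) :
    bf X (c + c') d = bf X c d + bf X c' d := by
  simp [bf, add_mul, add_smul, Finset.sum_add_distrib]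

lemma bf_add_right' {n : ℕ} (X : Matrix (Fin n) (Fin n) V) (c d d' : Fin n → ℂ) :
    bf X c (d + d') = bf X c d + bf X c d' := by
  simp [bf, mul_add, add_smul, Finset.sum_add_distrib]

lemma bf_single' {n : ℕ} (X : Matrix (Fin n) (Fin n) V) (j k : Fin n) (α β : ℂ) :
    bf X (Pi.single j α) (Pi.single k β) = (star α * β) • X j k := by
  rw [bf, Finset.sum_eq_single k]
  · rw [Finset.sum_eq_single j]
    · simp [Pi.single_apply]
    · intro p _ hp; simp [Pi.single_apply, hp]
    · simp
  · intro q _ hq; simp [Pi.single_apply, hq]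
  · simp

lemma bf_neg' {n : ℕ} (X : Matrix (Fin n) (Fin n) V) (c d : Fin n → ℂ) :
    bf (-X) c d = -bf X c d := by
  simp [bf, smul_neg, ← Finset.sum_neg_distrib]

lemma conj_scalar_col' {n : ℕ} (c : Fin n → ℂ) (X : Matrix (Fin n) (Fin n) V) :
    P.conj (Matrix.of fun p (_ : Fin 1) => c p • (1 : A)) X 0 0 = bf X c c := by
  rw [P.conj_apply']
  refine Finset.sum_congr rfl fun q _ => Finset.sum_congr rfl fun p _ => ?_
  simp only [Matrix.of_apply, star_smul, star_one, P.smul_l, P.one_l,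
    P.r_smul, P.one_r', smul_smul]
  rw [mul_comm]

lemma matE_herm {n : ℕ} : (P.matE n)ᴴ = P.matE n := by
  ext i j
  rw [Matrix.conjTranspose_apply]
  by_cases h : i = j
  · subst h; simp [matE, P.e_isSelfAdjoint]
  · rw [show P.matE n j i = 0 by simp [matE, Matrix.diagonal_apply_ne _ (Ne.symm h)],
      show P.matE n i j = 0 by simp [matE, Matrix.diagonal_apply_ne _ h], star_zero]

lemma conj_matE' {n : ℕ} (C : Matrix (Fin n) (Fin 1) A) :
    P.conj C (P.matE n) 0 0 = ∑ p, P.r (P.l (star (C p 0)) P.e) (C p 0) := by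
  rw [P.conj_apply']
  refine Finset.sum_congr rfl fun q _ => ?_
  rw [Finset.sum_eq_single q]
  · congr 1
    simp [matE]
  · intro p _ hp
    rw [show P.matE n p q = 0 by simp [matE, Matrix.diagonal_apply_ne _ hp],
      P.l_zero', P.r_zero']
  · intro h; exact absurd (Finset.mem_univ q) h

lemma conj_matE_pos' {n : ℕ} (C : Matrix (Fin n) (Fin 1) A) :
    P.conj C (P.matE n) 0 0 ∈ P.pos := by
  rw [P.conj_matE']
  exact P.sum_pos _ _ fun p _ => P.conj_mem (C p 0) P.e P.e_pos

lemma cmin_salient' {n : ℕ} (X : Matrix (Fin n) (Fin n) V)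
    (hX : X ∈ P.Cmin n) (hnX : -X ∈ P.Cmin n) : X = 0 := by
  have hbf : ∀ c : Fin n → ℂ, bf X c c = 0 := by
    intro c
    refine P.pos_salient _ ?_ ?_
    · rw [← P.conj_scalar_col']; exact hX.2 _
    · rw [← bf_neg', ← P.conj_scalar_col']; exact hnX.2 _
  have hdiag : ∀ m, X m m = 0 := by
    intro m
    have h := hbf (Pi.single m 1)
    rwa [bf_single', star_one, one_mul, one_smul] at h
  ext i j
  by_cases hij : i = j
  · subst hij; simp [hdiag i]
  · have h1 := hbf (Pi.single i 1 + Pi.single j 1)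
    simp only [bf_add_left', bf_add_right', bf_single', star_one, one_mul,
      one_smul, hdiag, smul_zero, zero_add, add_zero] at h1
    have h2 := hbf (Pi.single i 1 + Pi.single j Complex.I)
    simp only [bf_add_left', bf_add_right', bf_single', star_one, one_mul, mul_one,
      one_smul, hdiag, smul_zero, zero_add, add_zero, Complex.star_def,
      Complex.conj_I] at h2
    -- h2 : Complex.I • X i j + (-Complex.I) • X j i = 0
    have hji : X j i = X i j := by
      have h3 : Complex.I • (X i j - X j i) = 0 := by
        rw [smul_sub]
        rw [neg_smul] at h2
        linear_combination (norm := module) h2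
      have h4 := (smul_eq_zero.mp h3).resolve_left Complex.I_ne_zero
      rw [sub_eq_zero] at h4
      exact h4.symm
    rw [hji] at h1
    have h5 : (2 : ℂ) • X i j = 0 := by rw [two_smul]; exact h1
    have := (smul_eq_zero.mp h5).resolve_left two_ne_zero
    simpa using this

end Aux3

end AOUPack

universe u

/-- Theorem 3.3 (ii): if every positive `𝒜`-bimodule map from any operator `𝒜`-system
into `(V, (Q_n), e)` is completely positive, then `(Q_n)` is the minimal operator
`𝒜`-system structure (the identity is a unital `𝒜`-bimodule complete order
isomorphism onto `omin_𝒜(V)`). -/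
theorem eq_cmin_of_univ_property
    {A : Type*} [CStarAlgebra A]
    {V : Type u} [AddCommGroup V] [Module ℂ V] [StarAddMonoid V] [StarModule ℂ V]
    (P : AOUPack A V) (Q : ∀ n : ℕ, Set (Matrix (Fin n) (Fin n) V))
    (hQ : P.IsOperatorSystemStructure Q)
    (huniv : ∀ (S : Type u) [AddCommGroup S] [Module ℂ S] [StarAddMonoid S]
      [StarModule ℂ S] (PS : AOUPack A S)
      (QS : ∀ n : ℕ, Set (Matrix (Fin n) (Fin n) S)),
      PS.IsOperatorSystemStructure QS →
      ∀ φ : S →ₗ[ℂ] V,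
        (∀ (a : A) (x : S), φ (PS.l a x) = P.l a (φ x)) →
        (∀ (x : S) (a : A), φ (PS.r x a) = P.r (φ x) a) →
        (∀ x ∈ PS.pos, φ x ∈ P.pos) →
        ∀ n : ℕ, ∀ X ∈ QS n, X.map φ ∈ Q n) :
    ∀ n : ℕ, Q n = P.Cmin n := by
  have hsub : ∀ n, Q n ⊆ P.Cmin n := by
    intro n X hX
    refine ⟨hQ.herm n X hX, fun C => ?_⟩
    exact (hQ.level_one _).mp (hQ.compat n 1 X C hX)
  have hmin : P.IsOperatorSystemStructure P.Cmin := by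
    constructor
    · intro n X hX; exact hX.1
    · intro n X hX Y hY
      refine ⟨by rw [Matrix.conjTranspose_add, hX.1, hY.1], fun C => ?_⟩
      rw [P.conj_add', Matrix.add_apply]
      exact P.pos_add_mem _ (hX.2 C) _ (hY.2 C)
    · intro n t ht X hX
      refine ⟨?_, fun C => ?_⟩
      · simp [Matrix.conjTranspose_smul, hX.1, Complex.star_def, Complex.conj_ofReal]
      · rw [P.conj_smul', Matrix.smul_apply]
        exact P.pos_smul_mem t ht _ (hX.2 C)
    · intro n
      refine ⟨0, Matrix.conjTranspose_zero, fun C => ?_⟩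
      rw [P.conj_zero', Matrix.zero_apply]
      exact P.zero_pos
    · intro n X hX hnX
      exact P.cmin_salient' X hX hnX
    · intro m n X M hX
      refine ⟨by rw [P.conj_conjTranspose', hX.1], fun C => ?_⟩
      rw [P.conj_conj']
      exact hX.2 _
    · intro X
      constructor
      · intro hX
        have h := hX.2 (Matrix.of fun _ _ => (1 : A))
        rw [P.conj_apply'] at h
        simpa [Fin.sum_univ_one, P.one_l, P.one_r'] using h
      · intro hx
        refine ⟨?_, fun C => ?_⟩
        · ext i j
          rw [Matrix.conjTranspose_apply, Subsingleton.elim i 0, Subsingleton.elim j 0,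
            P.pos_isSelfAdjoint _ hx]
        · rw [P.conj_apply']
          simp only [Fin.sum_univ_one]
          exact P.conj_mem _ _ hx
    · intro n X hherm
      obtain ⟨t, ht, h⟩ := hQ.orderUnit n X hherm
      exact ⟨t, ht, hsub n h⟩
    · intro n X hX
      have hherm : Xᴴ = X := by
        have h1 := (hX 1 one_pos).1
        rw [Matrix.conjTranspose_add, Matrix.conjTranspose_smul, P.matE_herm] at h1
        simp only [Complex.ofReal_one, one_smul, star_one] at h1
        exact add_right_cancel h1
      refine ⟨hherm, fun C => ?_⟩
      have hypos := P.conj_matE_pos' C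
      obtain ⟨s, hs, hse⟩ := P.e_orderUnit _ (P.pos_isSelfAdjoint _ hypos)
      apply P.e_arch
      intro u hu
      have htu : (0 : ℝ) < u / s := by positivity
      have hmem := (hX (u / s) htu).2 C
      rw [P.conj_add', Matrix.add_apply, P.conj_smul', Matrix.smul_apply] at hmem
      have h2 := P.pos_smul_mem (u / s) (le_of_lt htu) _ hse
      have h3 := P.pos_add_mem _ hmem _ h2
      have heq : P.conj C X 0 0 + ((u / s : ℝ) : ℂ) • P.conj C (P.matE n) 0 0
          + ((u / s : ℝ) : ℂ) • ((s : ℂ) • P.e - P.conj C (P.matE n) 0 0)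
          = P.conj C X 0 0 + (u : ℂ) • P.e := by
        rw [smul_sub, smul_smul]
        have hc : ((u / s : ℝ) : ℂ) * (s : ℂ) = (u : ℂ) := by
          have hs0 : (s : ℂ) ≠ 0 := Complex.ofReal_ne_zero.mpr hs.ne'
          push_cast
          exact div_mul_cancel₀ _ hs0
        rw [hc]
        abel
      rwa [heq] at h3
  have h2 : ∀ n, P.Cmin n ⊆ Q n := by
    intro n X hX
    have := huniv V P P.Cmin hmin LinearMap.id (fun a x => rfl) (fun x a => rfl)
      (fun x hx => hx) n X hX
    simpa using this
  intro n
  exact Set.Subset.antisymm (hsub n) (h2 n)
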